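/- Let G be a DAG that is the disjoint union of two subgraphs G₁ and G₂. Then the vanishing ideal of the Gaussian Bayesian network satisfies I_G = I_{G₁} + I_{G₂} + ⟨σ_{ij} : i ∈ V(G₁), j ∈ V(G₂)⟩. -/

import Mathlib

open MvPolynomial

/-- A directed acyclic graph on vertices `{0, …, n-1}`, numerically ordered:
`i → j` only if `i < j`. -/
structure DAG (n : ℕ) where
  edge : Fin n → Fin n → Bool
  increasing : ∀ i j, edge i j = true → i < j

namespace DAG

variable {n : ℕ}

/-- Indeterminates: `a_i` for each vertex (Sum.inl) and `λ_{kl}` for each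
potential edge (Sum.inr). -/
abbrev Vars (n : ℕ) := Fin n ⊕ (Fin n × Fin n)

/-- `L` is the directed path from the top down to `i`, `R` from the top down to `j`;
they share exactly the top vertex, and the resulting colliderless path is simple. -/
def IsTrek (G : DAG n) (i j : Fin n) (L R : List (Fin n)) : Prop :=
  L ≠ [] ∧ R ≠ [] ∧ L.head? = R.head? ∧ L.getLast? = some i ∧ R.getLast? = some j ∧
    L.Chain' (fun a b => G.edge a b = true) ∧ R.Chain' (fun a b => G.edge a b = true) ∧
    (L ++ R.tail).Nodup

/-- The type of treks from `i` to `j` in `G`. -/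
def Trek (G : DAG n) (i j : Fin n) : Type :=
  {p : {l : List (Fin n) // l.Nodup} × {l : List (Fin n) // l.Nodup} //
    IsTrek G i j p.1.1 p.2.1}

noncomputable instance (G : DAG n) (i j : Fin n) : Fintype (Trek G i j) := by
  classical exact Subtype.fintype _

def Trek.left {G : DAG n} {i j : Fin n} (P : Trek G i j) : List (Fin n) := P.1.1.1
def Trek.right {G : DAG n} {i j : Fin n} (P : Trek G i j) : List (Fin n) := P.1.2.1

/-- The topmost vertex of a trek. -/
def Trek.top {G : DAG n} {i j : Fin n} (P : Trek G i j) : Fin n := P.left.head?.getD i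

/-- The consecutive pairs (directed edges) of a vertex list. -/
def pathEdges (l : List (Fin n)) : List (Fin n × Fin n) := l.zip l.tail

/-- The (directed) edges used by a trek. -/
def Trek.edges {G : DAG n} {i j : Fin n} (P : Trek G i j) : List (Fin n × Fin n) :=
  pathEdges P.left ++ pathEdges P.right

/-- The monomial `a_{top(P)} · ∏_{k→l ∈ P} λ_{kl}` of a trek. -/
noncomputable def Trek.poly {G : DAG n} {i j : Fin n} (P : Trek G i j) :
    MvPolynomial (Vars n) ℂ :=
  X (Sum.inl P.top) * (P.edges.map (fun e => X (Sum.inr e))).prod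

/-- The trek-rule polynomial `σ_{ij}(a,λ) = ∑_{P ∈ T(i,j)} a_{top(P)} ∏_{k→l∈P} λ_{kl}`. -/
noncomputable def trekPoly (G : DAG n) (i j : Fin n) : MvPolynomial (Vars n) ℂ :=
  ∑ P : Trek G i j, P.poly

/-- The parent set `pa(j)` of a vertex. -/
def parents (G : DAG n) (j : Fin n) : Finset (Fin n) :=
  Finset.univ.filter (fun k => G.edge k j = true)

/-- Index set for the entries `σ_{ij}`, `1 ≤ i ≤ j ≤ n`, of a symmetric matrix. -/
abbrev SymIdx (n : ℕ) := {p : Fin n × Fin n // p.1 ≤ p.2}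

/-- The variable index `σ_{ij}` (sorted). -/
def sIdx (i j : Fin n) : SymIdx n :=
  if h : i ≤ j then ⟨(i, j), h⟩ else ⟨(j, i), (le_total i j).resolve_left h⟩

/-- The trek-rule ring homomorphism `φ_G : ℂ[σ] → ℂ[a,λ]`. -/
noncomputable def phi (G : DAG n) :
    MvPolynomial (SymIdx n) ℂ →ₐ[ℂ] MvPolynomial (Vars n) ℂ :=
  aeval (fun p => trekPoly G p.1.1 p.1.2)

/-- The vanishing ideal `I_G = ker φ_G` of the Gaussian Bayesian network of `G`. -/
noncomputable def gaussianIdeal (G : DAG n) : Ideal (MvPolynomial (SymIdx n) ℂ) :=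
  RingHom.ker (phi G)

/-- The underlying undirected graph of `G`. -/
def underlying (G : DAG n) : SimpleGraph (Fin n) where
  Adj i j := G.edge i j = true ∨ G.edge j i = true
  symm := ⟨fun i j h => h.symm⟩
  loopless := by
    constructor
    intro i h
    rcases h with h | h <;> exact absurd (G.increasing i i h) (lt_irrefl i)

/-- A polytree: a DAG whose underlying undirected graph is a tree. -/
def IsPolytree (G : DAG n) : Prop := G.underlying.IsTree

/-- `c` is a choke point between `I` and `J`: every trek from `I` to `J` contains `c`,
and `c` is on the `I`-side of every such trek, or on the `J`-side of every such trek. -/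
def IsChokePoint (G : DAG n) (I J : Set (Fin n)) (c : Fin n) : Prop :=
  (∀ i ∈ I, ∀ j ∈ J, ∀ P : Trek G i j, c ∈ P.left) ∨
  (∀ i ∈ I, ∀ j ∈ J, ∀ P : Trek G i j, c ∈ P.right)

/-- The induced subgraph on a vertex subset `S` (kept on the same vertex set). -/
def induce (G : DAG n) (S : Finset (Fin n)) : DAG n where
  edge i j := decide (G.edge i j = true ∧ i ∈ S ∧ j ∈ S)
  increasing := by
    intro i j h
    exact G.increasing i j (of_decide_eq_true h).1

/-- Indices `σ_{ij}` with both `i, j ∈ S`. -/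
abbrev SubIdx (n : ℕ) (S : Finset (Fin n)) := {p : SymIdx n // p.1.1 ∈ S ∧ p.1.2 ∈ S}

/-- The trek-rule homomorphism restricted to the variables `σ_{ij}`, `i,j ∈ S`. -/
noncomputable def phiSub (G : DAG n) (S : Finset (Fin n)) :
    MvPolynomial (SubIdx n S) ℂ →ₐ[ℂ] MvPolynomial (Vars n) ℂ :=
  aeval (fun p => trekPoly G p.1.1.1 p.1.1.2)

/-- The ideal `I_{G,S} = I_G ∩ ℂ[σ_{ij} : i,j ∈ S]` of the model with observed
variables `S` (the remaining variables hidden). -/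
noncomputable def hiddenIdeal (G : DAG n) (S : Finset (Fin n)) :
    Ideal (MvPolynomial (SubIdx n S) ℂ) :=
  RingHom.ker (phiSub G S)

end DAG


section AlgAux

section AlgCore
variable {V τ₁ τ₂ σ τ : Type*}

/-- A linear section: for any linear map over a field there is `s` with `f ∘ s ∘ f = f`. -/
lemma exists_linear_section {A B : Type*} [AddCommGroup A] [Module ℂ A]
    [AddCommGroup B] [Module ℂ B] (f : A →ₗ[ℂ] B) :
    ∃ s : B →ₗ[ℂ] A, ∀ a, f (s (f a)) = f a := by
  obtain ⟨π, hπ⟩ := LinearMap.exists_leftInverse_of_injective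
    (LinearMap.range f).subtype (Submodule.ker_subtype _)
  obtain ⟨ρ, hρ⟩ := f.rangeRestrict.exists_rightInverse_of_surjective
    (LinearMap.range_eq_top.2 f.surjective_rangeRestrict)
  refine ⟨ρ.comp π, fun a => ?_⟩
  have h1 : π (f a) = f.rangeRestrict a := by
    have := LinearMap.congr_fun hπ (f.rangeRestrict a)
    simpa using this
  have h2 : f.rangeRestrict (ρ (f.rangeRestrict a)) = f.rangeRestrict a :=
    LinearMap.congr_fun hρ _
  have h3 : f (ρ (f.rangeRestrict a)) = f a := congrArg Subtype.val h2
  simpa [h1] using h3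

lemma aeval_mem_supported (W : Set V) (φ : σ → MvPolynomial V ℂ)
    (hφ : ∀ t, φ t ∈ supported ℂ W) (p : MvPolynomial σ ℂ) :
    aeval φ p ∈ supported ℂ W := by
  induction p using MvPolynomial.induction_on with
  | C a => rw [aeval_C]; exact Subalgebra.algebraMap_mem _ a
  | add p q hp hq => rw [map_add]; exact add_mem hp hq
  | mul_X p s hp => rw [map_mul, aeval_X]; exact mul_mem hp (hφ s)

lemma support_subset_of_mem_supported {W : Set V} {p : MvPolynomial V ℂ}
    (hp : p ∈ supported ℂ W) {m : V →₀ ℕ} (hm : m ∈ p.support) : ↑m.support ⊆ W := by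
  intro v hv
  exact mem_supported.mp hp ((mem_vars v).mpr ⟨m, hm, hv⟩)

end AlgCore

section Indep
variable {V : Type*}

lemma coeff_eq_zero_of_not_subset {W : Set V} {p : MvPolynomial V ℂ}
    (hp : p ∈ supported ℂ W) {ν : V →₀ ℕ} (hν : ¬ ↑ν.support ⊆ W) :
    coeff ν p = 0 := by
  by_contra h
  exact hν (support_subset_of_mem_supported hp (mem_support_iff.mpr h))

set_option maxHeartbeats 2000000 in
lemma indep_coeff [DecidableEq V] {W₁ W₂ : Set V} (hW : Disjoint W₁ W₂) {m : ℕ}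
    (P c : Fin m → MvPolynomial V ℂ)
    (hP : ∀ k, P k ∈ supported ℂ W₁) (hc : ∀ k, c k ∈ supported ℂ W₂)
    (h0 : ∑ k, P k * c k = 0) (μ : V →₀ ℕ) (hμ : ↑μ.support ⊆ W₂) :
    ∑ k, coeff μ (c k) • P k = 0 := by
  ext ν
  rw [coeff_zero]
  by_cases hν : ↑ν.support ⊆ W₁
  · have key : ∀ k, coeff (ν + μ) (P k * c k) = coeff μ (c k) * coeff ν (P k) := by
      intro k
      rw [coeff_mul]
      rw [show coeff μ (c k) * coeff ν (P k) = coeff ν (P k) * coeff μ (c k) from mul_comm _ _]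
      have hmem : (ν, μ) ∈ Finset.HasAntidiagonal.antidiagonal (ν + μ) := Finset.HasAntidiagonal.mem_antidiagonal.mpr rfl
      apply Finset.sum_eq_single_of_mem (ν, μ) hmem
      rintro ⟨a, b⟩ hab hne
      rw [Finset.HasAntidiagonal.mem_antidiagonal] at hab
      by_contra hprod
      have ha : coeff a (P k) ≠ 0 := fun h => hprod (by simp [h])
      have hb : coeff b (c k) ≠ 0 := fun h => hprod (by simp [h])
      have haW : ↑a.support ⊆ W₁ :=
        support_subset_of_mem_supported (hP k) (mem_support_iff.mpr ha)
      have hbW : ↑b.support ⊆ W₂ :=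
        support_subset_of_mem_supported (hc k) (mem_support_iff.mpr hb)
      apply hne
      have hpt : ∀ v, a v = ν v ∧ b v = μ v := by
        intro v
        have hsum : a v + b v = ν v + μ v := by
          have := congrFun (congrArg (↑· : (V →₀ ℕ) → V → ℕ) hab) v
          simpa using this
        have hz : ∀ (x : V →₀ ℕ) (W : Set V), ↑x.support ⊆ W → v ∉ W → x v = 0 := by
          intro x W hx hv
          by_contra h
          exact hv (hx (Finsupp.mem_support_iff.mpr h))
        by_cases hv1 : v ∈ W₁
        · have hv2 : v ∉ W₂ := fun h => (Set.disjoint_left.mp hW hv1) h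
          have hb0 : b v = 0 := hz b W₂ hbW hv2
          have hμ0 : μ v = 0 := hz μ W₂ hμ hv2
          omega
        · by_cases hv2 : v ∈ W₂
          · have ha0 : a v = 0 := hz a W₁ haW hv1
            have hν0 : ν v = 0 := hz ν W₁ hν hv1
            omega
          · have ha0 : a v = 0 := hz a W₁ haW hv1
            have hb0 : b v = 0 := hz b W₂ hbW hv2
            have hν0 : ν v = 0 := hz ν W₁ hν hv1
            have hμ0 : μ v = 0 := hz μ W₂ hμ hv2
            omega
      exact Prod.ext (Finsupp.ext fun v => (hpt v).1) (Finsupp.ext fun v => (hpt v).2)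
    have := congrArg (coeff (ν + μ)) h0
    rw [coeff_sum, coeff_zero] at this
    simp only [key] at this
    rw [coeff_sum]
    simp only [coeff_smul, smul_eq_mul]
    exact this
  · rw [coeff_sum]
    apply Finset.sum_eq_zero
    intro k _
    rw [coeff_smul, coeff_eq_zero_of_not_subset (hP k) hν, smul_eq_mul, mul_zero]

end Indep

section KerZ
variable {σ τ V : Type*}

lemma sub_kill_mem (p : MvPolynomial (σ ⊕ τ) ℂ) :
    p - rename Sum.inl (aeval (Sum.elim X fun _ => (0 : MvPolynomial σ ℂ)) p) ∈
      Ideal.span (Set.range fun t : τ => (X (Sum.inr t) : MvPolynomial (σ ⊕ τ) ℂ)) := by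
  induction p using MvPolynomial.induction_on with
  | C a => rw [aeval_C]; simp only [algebraMap_eq, rename_C, sub_self]; exact zero_mem _
  | add p q hp hq =>
      rw [map_add, map_add]
      have : p + q - (rename Sum.inl (aeval (Sum.elim X fun _ => (0:MvPolynomial σ ℂ)) p) +
          rename Sum.inl (aeval (Sum.elim X fun _ => (0:MvPolynomial σ ℂ)) q)) =
          (p - rename Sum.inl (aeval (Sum.elim X fun _ => (0:MvPolynomial σ ℂ)) p)) +
          (q - rename Sum.inl (aeval (Sum.elim X fun _ => (0:MvPolynomial σ ℂ)) q)) := by ring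
      rw [this]
      exact add_mem hp hq
  | mul_X p v hp =>
      cases v with
      | inl i =>
          rw [map_mul, aeval_X, Sum.elim_inl, map_mul, rename_X]
          have : p * X (Sum.inl i) -
              rename Sum.inl (aeval (Sum.elim X fun _ => (0:MvPolynomial σ ℂ)) p) * X (Sum.inl i) =
              (p - rename Sum.inl (aeval (Sum.elim X fun _ => (0:MvPolynomial σ ℂ)) p)) *
                X (Sum.inl i) := by ring
          rw [this]
          exact Ideal.mul_mem_right _ _ hp
      | inr t =>
          rw [map_mul, aeval_X, Sum.elim_inr, mul_zero, map_zero, sub_zero]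
          exact Ideal.mul_mem_left _ _ (Ideal.subset_span ⟨t, rfl⟩)

lemma kerZ (g : σ → MvPolynomial V ℂ) :
    RingHom.ker (aeval (Sum.elim g fun _ : τ => (0 : MvPolynomial V ℂ)) :
        MvPolynomial (σ ⊕ τ) ℂ →ₐ[ℂ] MvPolynomial V ℂ) =
      Ideal.map (rename Sum.inl : MvPolynomial σ ℂ →ₐ[ℂ] MvPolynomial (σ ⊕ τ) ℂ)
          (RingHom.ker (aeval g : MvPolynomial σ ℂ →ₐ[ℂ] MvPolynomial V ℂ))
        ⊔ Ideal.span (Set.range fun t : τ => (X (Sum.inr t) : MvPolynomial (σ ⊕ τ) ℂ)) := by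
  apply le_antisymm
  · intro p hp
    rw [RingHom.mem_ker] at hp
    set q := aeval (Sum.elim X fun _ => (0 : MvPolynomial σ ℂ)) p with hq
    have hqk : q ∈ RingHom.ker (aeval g : MvPolynomial σ ℂ →ₐ[ℂ] MvPolynomial V ℂ) := by
      rw [RingHom.mem_ker, hq, ← AlgHom.comp_apply, comp_aeval]
      have : (fun i => aeval g (Sum.elim X (fun _ => (0 : MvPolynomial σ ℂ)) i)) =
          Sum.elim g (fun _ : τ => (0 : MvPolynomial V ℂ)) := by
        funext i; cases i <;> simp
      rw [this]
      exact hp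
    have hdiff := sub_kill_mem (σ := σ) (τ := τ) p
    have : p = rename Sum.inl q + (p - rename Sum.inl q) := by ring
    rw [this]
    exact add_mem (Ideal.mem_sup_left (Ideal.mem_map_of_mem _ hqk))
      (Ideal.mem_sup_right hdiff)
  · apply sup_le
    · rw [Ideal.map_le_iff_le_comap]
      intro x hx
      rw [RingHom.mem_ker] at hx
      simp only [Ideal.mem_comap, RingHom.mem_ker, aeval_rename, Sum.elim_comp_inl]
      exact hx
    · rw [Ideal.span_le]
      rintro y ⟨t, rfl⟩
      simp only [SetLike.mem_coe, RingHom.mem_ker, aeval_X, Sum.elim_inr]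

end KerZ

section KerT
variable {τ₁ τ₂ V : Type*}

lemma kerT [DecidableEq V] (W₁ W₂ : Set V) (hW : Disjoint W₁ W₂)
    (φ₁ : τ₁ → MvPolynomial V ℂ) (φ₂ : τ₂ → MvPolynomial V ℂ)
    (h1 : ∀ t, φ₁ t ∈ supported ℂ W₁) (h2 : ∀ t, φ₂ t ∈ supported ℂ W₂) :
    RingHom.ker (aeval (Sum.elim φ₁ φ₂) : MvPolynomial (τ₁ ⊕ τ₂) ℂ →ₐ[ℂ] MvPolynomial V ℂ)
      = Ideal.map (rename Sum.inl : MvPolynomial τ₁ ℂ →ₐ[ℂ] MvPolynomial (τ₁ ⊕ τ₂) ℂ)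
          (RingHom.ker (aeval φ₁ : MvPolynomial τ₁ ℂ →ₐ[ℂ] MvPolynomial V ℂ))
        ⊔ Ideal.map (rename Sum.inr : MvPolynomial τ₂ ℂ →ₐ[ℂ] MvPolynomial (τ₁ ⊕ τ₂) ℂ)
          (RingHom.ker (aeval φ₂ : MvPolynomial τ₂ ℂ →ₐ[ℂ] MvPolynomial V ℂ)) := by
  obtain ⟨s, hs⟩ := exists_linear_section
    (AlgHom.toLinearMap (aeval φ₂ : MvPolynomial τ₂ ℂ →ₐ[ℂ] MvPolynomial V ℂ))
  simp only [AlgHom.toLinearMap_apply] at hs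
  set J₂ : Ideal (MvPolynomial (τ₁ ⊕ τ₂) ℂ) :=
    Ideal.map (rename Sum.inr : MvPolynomial τ₂ ℂ →ₐ[ℂ] MvPolynomial (τ₁ ⊕ τ₂) ℂ)
      (RingHom.ker (aeval φ₂ : MvPolynomial τ₂ ℂ →ₐ[ℂ] MvPolynomial V ℂ)) with hJ₂
  have hsub : ∀ b : MvPolynomial τ₂ ℂ,
      rename Sum.inr (b - s (aeval φ₂ b)) ∈ J₂ := by
    intro b
    apply Ideal.mem_map_of_mem
    rw [RingHom.mem_ker, map_sub, hs, sub_self]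
  have hJker : J₂ ≤ RingHom.ker (aeval (Sum.elim φ₁ φ₂) :
      MvPolynomial (τ₁ ⊕ τ₂) ℂ →ₐ[ℂ] MvPolynomial V ℂ) := by
    rw [hJ₂, Ideal.map_le_iff_le_comap]
    intro x hx
    rw [RingHom.mem_ker] at hx
    simp only [Ideal.mem_comap, RingHom.mem_ker, aeval_rename, Sum.elim_comp_inr]
    exact hx
  have claimA : ∀ p : MvPolynomial (τ₁ ⊕ τ₂) ℂ, ∃ (m : ℕ) (u : Fin m → MvPolynomial τ₁ ℂ)
      (w : Fin m → MvPolynomial τ₂ ℂ),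
      p - ∑ k, rename Sum.inl (u k) * rename Sum.inr (s (aeval φ₂ (w k))) ∈ J₂ := by
    intro p
    induction p using MvPolynomial.induction_on with
    | C a =>
        refine ⟨1, fun _ => C a, fun _ => 1, ?_⟩
        rw [Fin.sum_univ_one, rename_C]
        have : C a - C a * rename (Sum.inr : τ₂ → τ₁ ⊕ τ₂) (s (aeval φ₂ (1 : MvPolynomial τ₂ ℂ))) =
            C a * (rename (Sum.inr : τ₂ → τ₁ ⊕ τ₂) ((1 : MvPolynomial τ₂ ℂ) -
              s (aeval φ₂ (1 : MvPolynomial τ₂ ℂ)))) := by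
          simp only [map_sub, map_one]; ring
        rw [this]
        exact Ideal.mul_mem_left _ _ (hsub 1)
    | add p q hp hq =>
        obtain ⟨m₁, u₁, w₁, hp'⟩ := hp
        obtain ⟨m₂, u₂, w₂, hq'⟩ := hq
        refine ⟨m₁ + m₂, Fin.append u₁ u₂, Fin.append w₁ w₂, ?_⟩
        rw [Fin.sum_univ_add]
        simp only [Fin.append_left, Fin.append_right]
        have : p + q - (∑ k : Fin m₁, rename Sum.inl (u₁ k) * rename Sum.inr (s (aeval φ₂ (w₁ k)))
            + ∑ k : Fin m₂, rename Sum.inl (u₂ k) * rename Sum.inr (s (aeval φ₂ (w₂ k)))) =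
            (p - ∑ k : Fin m₁, rename Sum.inl (u₁ k) * rename Sum.inr (s (aeval φ₂ (w₁ k)))) +
            (q - ∑ k : Fin m₂, rename Sum.inl (u₂ k) * rename Sum.inr (s (aeval φ₂ (w₂ k)))) := by
          ring
        rw [this]
        exact add_mem hp' hq'
    | mul_X p v hp =>
        obtain ⟨m, u, w, hp'⟩ := hp
        cases v with
        | inl i =>
            refine ⟨m, fun k => u k * X i, w, ?_⟩
            have hsum : ∑ k, rename Sum.inl (u k * X i) * rename Sum.inr (s (aeval φ₂ (w k))) =
                (∑ k, rename Sum.inl (u k) * rename Sum.inr (s (aeval φ₂ (w k)))) *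
                  X (Sum.inl i) := by
              rw [Finset.sum_mul]
              refine Finset.sum_congr rfl fun k _ => ?_
              rw [map_mul, rename_X]; ring
            rw [hsum]
            have : p * X (Sum.inl i) -
                (∑ k, rename Sum.inl (u k) * rename Sum.inr (s (aeval φ₂ (w k)))) * X (Sum.inl i) =
                (p - ∑ k, rename Sum.inl (u k) * rename Sum.inr (s (aeval φ₂ (w k)))) *
                  X (Sum.inl i) := by ring
            rw [this]
            exact Ideal.mul_mem_right _ _ hp'
        | inr t =>
            refine ⟨m, u, fun k => s (aeval φ₂ (w k)) * X t, ?_⟩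
            set S := ∑ k, rename Sum.inl (u k) * rename Sum.inr (s (aeval φ₂ (w k))) with hS
            set b : Fin m → MvPolynomial τ₂ ℂ := fun k => s (aeval φ₂ (w k)) * X t with hb
            have hSX : S * X (Sum.inr t) = ∑ k, rename Sum.inl (u k) * rename Sum.inr (b k) := by
              rw [hS, Finset.sum_mul]
              refine Finset.sum_congr rfl fun k _ => ?_
              rw [hb]
              simp only [map_mul, rename_X]
              ring
            have key : p * X (Sum.inr t) -
                ∑ k, rename Sum.inl (u k) * rename Sum.inr (s (aeval φ₂ (b k))) =
                (p - S) * X (Sum.inr t) +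
                ∑ k, rename Sum.inl (u k) * rename Sum.inr (b k - s (aeval φ₂ (b k))) := by
              have e1 : ∑ k, rename Sum.inl (u k) * rename Sum.inr (b k - s (aeval φ₂ (b k))) =
                  (∑ k, rename Sum.inl (u k) * rename Sum.inr (b k)) -
                  ∑ k, rename Sum.inl (u k) * rename Sum.inr (s (aeval φ₂ (b k))) := by
                rw [← Finset.sum_sub_distrib]
                refine Finset.sum_congr rfl fun k _ => ?_
                rw [map_sub]; ring
              rw [e1, ← hSX]; ring
            rw [key]
            refine add_mem (Ideal.mul_mem_right _ _ hp') (sum_mem fun k _ => ?_)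
            exact Ideal.mul_mem_left _ _ (hsub (b k))
  apply le_antisymm
  · intro p hp
    rw [RingHom.mem_ker] at hp
    obtain ⟨m, u, w, hΔ⟩ := claimA p
    set c : Fin m → MvPolynomial V ℂ := fun k => aeval φ₂ (w k) with hc
    set S := ∑ k, rename Sum.inl (u k) * rename Sum.inr (s (c k)) with hSdef
    set P : Fin m → MvPolynomial V ℂ := fun k => aeval φ₁ (u k) with hP
    have hcW : ∀ k, c k ∈ supported ℂ W₂ := fun k => aeval_mem_supported _ _ h2 _
    have hPW : ∀ k, P k ∈ supported ℂ W₁ := fun k => aeval_mem_supported _ _ h1 _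
    have hS0 : ∑ k, P k * c k = 0 := by
      have h1' : aeval (Sum.elim φ₁ φ₂) S = ∑ k, P k * c k := by
        rw [hSdef, map_sum]
        refine Finset.sum_congr rfl fun k _ => ?_
        rw [map_mul, aeval_rename, aeval_rename, Sum.elim_comp_inl, Sum.elim_comp_inr, hs]
      have h2' : aeval (Sum.elim φ₁ φ₂) S = 0 := by
        have := hJker hΔ
        rw [RingHom.mem_ker, map_sub, hp, zero_sub, neg_eq_zero] at this
        exact this
      rw [← h1', h2']
    set D : Finset (V →₀ ℕ) := Finset.univ.biUnion (fun k => (c k).support) with hD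
    have hq : ∀ μ ∈ D, (∑ k, coeff μ (c k) • u k) ∈
        RingHom.ker (aeval φ₁ : MvPolynomial τ₁ ℂ →ₐ[ℂ] MvPolynomial V ℂ) := by
      intro μ hμD
      rw [RingHom.mem_ker, map_sum]
      have hμW : ↑μ.support ⊆ W₂ := by
        obtain ⟨k, _, hk⟩ := Finset.mem_biUnion.mp hμD
        exact support_subset_of_mem_supported (hcW k) hk
      have hind := indep_coeff hW P c hPW hcW hS0 μ hμW
      calc ∑ k, aeval φ₁ (coeff μ (c k) • u k) = ∑ k, coeff μ (c k) • P k :=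
            Finset.sum_congr rfl fun k _ => by rw [map_smul]
        _ = 0 := hind
    have hck : ∀ k, ∑ μ ∈ D, monomial μ (coeff μ (c k)) = c k := by
      intro k
      have hsupp : (c k).support ⊆ D := fun μ hμ =>
        Finset.mem_biUnion.mpr ⟨k, Finset.mem_univ k, hμ⟩
      rw [← Finset.sum_subset hsupp (fun μ _ hμ => by
        rw [notMem_support_iff.mp hμ, map_zero])]
      exact support_sum_monomial_coeff (c k)
    have hS2 : ∑ μ ∈ D, rename (Sum.inl : τ₁ → τ₁ ⊕ τ₂) (∑ k, coeff μ (c k) • u k) *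
        rename (Sum.inr : τ₂ → τ₁ ⊕ τ₂) (s (monomial μ (1:ℂ))) = S := by
      calc ∑ μ ∈ D, rename (Sum.inl : τ₁ → τ₁ ⊕ τ₂) (∑ k, coeff μ (c k) • u k) *
            rename (Sum.inr : τ₂ → τ₁ ⊕ τ₂) (s (monomial μ (1:ℂ)))
          = ∑ μ ∈ D, ∑ k, rename Sum.inl (u k) *
              (coeff μ (c k) • rename (Sum.inr : τ₂ → τ₁ ⊕ τ₂) (s (monomial μ (1:ℂ)))) := by
            refine Finset.sum_congr rfl fun μ _ => ?_
            rw [map_sum, Finset.sum_mul]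
            refine Finset.sum_congr rfl fun k _ => ?_
            rw [map_smul, smul_mul_assoc, mul_smul_comm]
        _ = ∑ k, ∑ μ ∈ D, rename Sum.inl (u k) *
              (coeff μ (c k) • rename (Sum.inr : τ₂ → τ₁ ⊕ τ₂) (s (monomial μ (1:ℂ)))) :=
            Finset.sum_comm
        _ = S := by
            rw [hSdef]
            refine Finset.sum_congr rfl fun k _ => ?_
            rw [← Finset.mul_sum]
            congr 1
            calc ∑ μ ∈ D, coeff μ (c k) • rename (Sum.inr : τ₂ → τ₁ ⊕ τ₂) (s (monomial μ (1:ℂ)))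
                = rename (Sum.inr : τ₂ → τ₁ ⊕ τ₂) (s (∑ μ ∈ D, coeff μ (c k) • monomial μ (1:ℂ))) := by
                  rw [map_sum, map_sum]
                  exact Finset.sum_congr rfl fun μ _ => by rw [map_smul, map_smul]
              _ = rename (Sum.inr : τ₂ → τ₁ ⊕ τ₂) (s (c k)) := by
                  congr 2
                  calc ∑ μ ∈ D, coeff μ (c k) • monomial μ (1:ℂ)
                      = ∑ μ ∈ D, monomial μ (coeff μ (c k)) :=
                        Finset.sum_congr rfl fun μ _ => by
                          rw [smul_eq_C_mul, C_mul_monomial, mul_one]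
                    _ = c k := hck k
    have hSJ : S ∈ Ideal.map (rename Sum.inl : MvPolynomial τ₁ ℂ →ₐ[ℂ] MvPolynomial (τ₁ ⊕ τ₂) ℂ)
        (RingHom.ker (aeval φ₁ : MvPolynomial τ₁ ℂ →ₐ[ℂ] MvPolynomial V ℂ)) := by
      rw [← hS2]
      exact sum_mem fun μ hμ => Ideal.mul_mem_right _ _ (Ideal.mem_map_of_mem _ (hq μ hμ))
    have hps : p = S + (p - S) := by ring
    rw [hps]
    exact add_mem (Ideal.mem_sup_left hSJ) (Ideal.mem_sup_right hΔ)
  · apply sup_le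
    · rw [Ideal.map_le_iff_le_comap]
      intro x hx
      rw [RingHom.mem_ker] at hx
      simp only [Ideal.mem_comap, RingHom.mem_ker, aeval_rename, Sum.elim_comp_inl]
      exact hx
    · exact hJker

end KerT

section Plumb
variable {σ τ υ V : Type*}

lemma map_rename_map_rename (f : τ → υ) (g : σ → τ) (I : Ideal (MvPolynomial σ ℂ)) :
    Ideal.map (rename f : MvPolynomial τ ℂ →ₐ[ℂ] MvPolynomial υ ℂ)
      (Ideal.map (rename g : MvPolynomial σ ℂ →ₐ[ℂ] MvPolynomial τ ℂ) I) =
    Ideal.map (rename (f ∘ g) : MvPolynomial σ ℂ →ₐ[ℂ] MvPolynomial υ ℂ) I := by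
  apply le_antisymm
  · rw [Ideal.map_le_iff_le_comap, Ideal.map_le_iff_le_comap]
    intro x hx
    simp only [Ideal.mem_comap]
    rw [rename_rename]
    exact Ideal.mem_map_of_mem _ hx
  · rw [Ideal.map_le_iff_le_comap]
    intro x hx
    simp only [Ideal.mem_comap]
    rw [← rename_rename]
    exact Ideal.mem_map_of_mem _ (Ideal.mem_map_of_mem _ hx)

lemma ker_aeval_equiv {σ' : Type*} (e : σ ≃ σ') (F : σ → MvPolynomial V ℂ) :
    RingHom.ker (aeval F : MvPolynomial σ ℂ →ₐ[ℂ] MvPolynomial V ℂ) =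
      Ideal.map (rename ⇑e.symm : MvPolynomial σ' ℂ →ₐ[ℂ] MvPolynomial σ ℂ)
        (RingHom.ker (aeval (F ∘ ⇑e.symm) : MvPolynomial σ' ℂ →ₐ[ℂ] MvPolynomial V ℂ)) := by
  apply le_antisymm
  · intro p hp
    rw [RingHom.mem_ker] at hp
    have hid : p = rename ⇑e.symm (rename ⇑e p) := by
      rw [rename_rename]
      have : ⇑e.symm ∘ ⇑e = id := funext fun x => e.symm_apply_apply x
      rw [this, rename_id, AlgHom.id_apply]
    rw [hid]
    apply Ideal.mem_map_of_mem
    rw [RingHom.mem_ker, aeval_rename]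
    have : (F ∘ ⇑e.symm) ∘ ⇑e = F := funext fun x => by simp
    rw [this]
    exact hp
  · rw [Ideal.map_le_iff_le_comap]
    intro x hx
    rw [RingHom.mem_ker] at hx
    simp only [Ideal.mem_comap, RingHom.mem_ker, aeval_rename]
    exact hx

end Plumb

end AlgAux

section GraphAux
open DAG

variable {n : ℕ}

lemma chain_mem {G : DAG n} {S : Finset (Fin n)}
    (hS : ∀ a b, G.edge a b = true → b ∈ S → a ∈ S) :
    ∀ l : List (Fin n), l.Chain' (fun a b => G.edge a b = true) →
      ∀ i, l.getLast? = some i → i ∈ S → ∀ x ∈ l, x ∈ S := by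
  intro l
  induction l with
  | nil => intro _ i hi; simp at hi
  | cons a t ih =>
    intro hc i hi hiS x hx
    cases t with
    | nil =>
      have ha : a = i := by simpa using hi
      have hxa : x = a := by simpa using hx
      rw [hxa, ha]; exact hiS
    | cons b t' =>
      simp only [List.Chain', List.isChain_cons_cons] at hc
      have hlast : (b :: t').getLast? = some i := by
        rw [← List.getLast?_cons_cons (a := a)]; exact hi
      have hall := ih hc.2 i hlast hiS
      rcases List.mem_cons.mp hx with rfl | hx'
      · exact hS x b hc.1 (hall b (List.mem_cons_self (a := b) (l := t')))
      · exact hall x hx'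

lemma chain'_strengthen {α : Type*} {r s : α → α → Prop} :
    ∀ l : List α, l.Chain' r → (∀ a ∈ l, ∀ b ∈ l, r a b → s a b) → l.Chain' s := by
  intro l
  induction l with
  | nil => intro _ _; exact List.isChain_nil
  | cons a t ih =>
    intro hc h
    cases t with
    | nil => exact List.isChain_singleton a
    | cons b t' =>
      simp only [List.Chain', List.isChain_cons_cons] at hc ⊢
      exact ⟨h a (by simp) b (by simp) hc.1,
        ih hc.2 fun x hx y hy hr => h x (by simp [hx]) y (by simp [hy]) hr⟩

lemma pathEdges_rel {r : Fin n → Fin n → Prop} :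
    ∀ l : List (Fin n), l.Chain' r → ∀ p ∈ pathEdges l, r p.1 p.2 := by
  intro l
  induction l with
  | nil => intro _ p hp; simp [pathEdges] at hp
  | cons a t ih =>
    intro hc p hp
    cases t with
    | nil => simp [pathEdges] at hp
    | cons b t' =>
      simp only [List.Chain', List.isChain_cons_cons] at hc
      have hpe : pathEdges (a :: b :: t') = (a, b) :: pathEdges (b :: t') := rfl
      rw [hpe] at hp
      rcases List.mem_cons.mp hp with rfl | hp'
      · exact hc.1
      · exact ih hc.2 p hp'

lemma trek_empty {G : DAG n} {A B : Finset (Fin n)}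
    (hA : ∀ a b, G.edge a b = true → b ∈ A → a ∈ A)
    (hB : ∀ a b, G.edge a b = true → b ∈ B → a ∈ B)
    (hAB : Disjoint A B) {i j : Fin n} (hi : i ∈ A) (hj : j ∈ B) :
    IsEmpty (Trek G i j) := by
  constructor
  rintro P
  obtain ⟨hL, hR, hhead, hlastL, hlastR, hcL, hcR, hnd⟩ := P.2
  have hallL := chain_mem hA _ hcL i hlastL hi
  have hallR := chain_mem hB _ hcR j hlastR hj
  have h1 : (P.1.1.1).head hL ∈ A := hallL _ (List.head_mem hL)
  have h2 : (P.1.2.1).head hR ∈ B := hallR _ (List.head_mem hR)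
  have heq : (P.1.1.1).head hL = (P.1.2.1).head hR := by
    have e1 := List.head?_eq_head (l := P.1.1.1) hL
    have e2 := List.head?_eq_head (l := P.1.2.1) hR
    rw [e1, e2] at hhead
    exact Option.some.inj hhead
  rw [heq] at h1
  exact Finset.disjoint_left.mp hAB h1 h2

lemma trekPoly_eq_zero_of_empty {G : DAG n} {i j : Fin n} (h : IsEmpty (Trek G i j)) :
    trekPoly G i j = 0 := by
  rw [trekPoly]
  haveI := h
  rw [Finset.univ_eq_empty, Finset.sum_empty]

lemma isTrek_induce_iff {G : DAG n} {V₁ : Finset (Fin n)}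
    (hS : ∀ a b, G.edge a b = true → b ∈ V₁ → a ∈ V₁) {i j : Fin n} (hi : i ∈ V₁) (hj : j ∈ V₁)
    (L R : List (Fin n)) : IsTrek G i j L R ↔ IsTrek (G.induce V₁) i j L R := by
  constructor
  · rintro ⟨hL, hR, hhead, hlastL, hlastR, hcL, hcR, hnd⟩
    have hallL := chain_mem hS L hcL i hlastL hi
    have hallR := chain_mem hS R hcR j hlastR hj
    exact ⟨hL, hR, hhead, hlastL, hlastR,
      chain'_strengthen L hcL (fun a ha b hb h => decide_eq_true ⟨h, hallL a ha, hallL b hb⟩),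
      chain'_strengthen R hcR (fun a ha b hb h => decide_eq_true ⟨h, hallR a ha, hallR b hb⟩),
      hnd⟩
  · rintro ⟨hL, hR, hhead, hlastL, hlastR, hcL, hcR, hnd⟩
    exact ⟨hL, hR, hhead, hlastL, hlastR,
      chain'_strengthen L hcL (fun a _ b _ h => (of_decide_eq_true h).1),
      chain'_strengthen R hcR (fun a _ b _ h => (of_decide_eq_true h).1),
      hnd⟩

/-- Treks agree with treks of the induced subgraph. -/
def trekEquiv {G : DAG n} {V₁ : Finset (Fin n)}
    (hS : ∀ a b, G.edge a b = true → b ∈ V₁ → a ∈ V₁) {i j : Fin n} (hi : i ∈ V₁) (hj : j ∈ V₁) :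
    Trek G i j ≃ Trek (G.induce V₁) i j :=
  Equiv.subtypeEquivRight fun p => isTrek_induce_iff hS hi hj p.1.1 p.2.1

set_option maxHeartbeats 1000000 in
lemma trekPoly_induce {G : DAG n} {V₁ : Finset (Fin n)}
    (hS : ∀ a b, G.edge a b = true → b ∈ V₁ → a ∈ V₁) {i j : Fin n} (hi : i ∈ V₁) (hj : j ∈ V₁) :
    trekPoly G i j = trekPoly (G.induce V₁) i j := by
  rw [trekPoly, trekPoly]
  refine Fintype.sum_equiv (trekEquiv hS hi hj) _ _ (fun P => ?_)
  rfl

lemma trekPoly_mem_supported {G : DAG n} {V₁ : Finset (Fin n)} {i j : Fin n}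
    (hi : i ∈ V₁) (hj : j ∈ V₁) :
    trekPoly (G.induce V₁) i j ∈ supported ℂ
      {v : Vars n | Sum.elim (fun a => a ∈ V₁) (fun e : Fin n × Fin n => e.1 ∈ V₁ ∧ e.2 ∈ V₁) v} := by
  rw [trekPoly]
  refine sum_mem fun P _ => ?_
  obtain ⟨hL, hR, hhead, hlastL, hlastR, hcL, hcR, hnd⟩ := P.2
  have hSind : ∀ a b, (G.induce V₁).edge a b = true → b ∈ V₁ → a ∈ V₁ :=
    fun a b h _ => (of_decide_eq_true h).2.1
  have hallL := chain_mem hSind _ hcL i hlastL hi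
  refine mul_mem ?_ ?_
  · refine X_mem_supported.mpr ?_
    have htop : P.top ∈ V₁ := by
      have h1 : P.left.head? = some (P.left.head hL) := List.head?_eq_head hL
      rw [Trek.top, h1, Option.getD_some]
      exact hallL _ (List.head_mem hL)
    exact htop
  · refine Subalgebra.list_prod_mem _ ?_
    intro x hx
    obtain ⟨ed, hed, rfl⟩ := List.mem_map.mp hx
    rw [Trek.edges] at hed
    refine X_mem_supported.mpr ?_
    rcases List.mem_append.mp hed with h' | h'
    · have hab := pathEdges_rel _ hcL ed h'
      have hd := of_decide_eq_true hab
      exact ⟨hd.2.1, hd.2.2⟩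
    · have hab := pathEdges_rel _ hcR ed h'
      have hd := of_decide_eq_true hab
      exact ⟨hd.2.1, hd.2.2⟩

/-- The cross indices. -/
abbrev CrossIdx (n : ℕ) (V₁ V₂ : Finset (Fin n)) : Type :=
  {p : SymIdx n // (p.1.1 ∈ V₁ ∧ p.1.2 ∈ V₂) ∨ (p.1.1 ∈ V₂ ∧ p.1.2 ∈ V₁)}

/-- Splitting the symmetric indices into three classes. -/
def splitIdx {n : ℕ} (V₁ V₂ : Finset (Fin n)) (hdisj : Disjoint V₁ V₂)
    (hcover : V₁ ∪ V₂ = Finset.univ) [DecidablePred (· ∈ V₁)] [DecidablePred (· ∈ V₂)] :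
    SymIdx n ≃ (SubIdx n V₁ ⊕ SubIdx n V₂) ⊕ CrossIdx n V₁ V₂ where
  toFun p :=
    if h1 : p.1.1 ∈ V₁ ∧ p.1.2 ∈ V₁ then .inl (.inl ⟨p, h1⟩)
    else if h2 : p.1.1 ∈ V₂ ∧ p.1.2 ∈ V₂ then .inl (.inr ⟨p, h2⟩)
    else .inr ⟨p, by
      have m1 : p.1.1 ∈ V₁ ∪ V₂ := by rw [hcover]; exact Finset.mem_univ _
      have m2 : p.1.2 ∈ V₁ ∪ V₂ := by rw [hcover]; exact Finset.mem_univ _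
      rcases Finset.mem_union.mp m1 with ha | ha <;> rcases Finset.mem_union.mp m2 with hb | hb
      · exact absurd ⟨ha, hb⟩ h1
      · exact Or.inl ⟨ha, hb⟩
      · exact Or.inr ⟨ha, hb⟩
      · exact absurd ⟨ha, hb⟩ h2⟩
  invFun := Sum.elim (Sum.elim Subtype.val Subtype.val) Subtype.val
  left_inv p := by dsimp only; split_ifs <;> rfl
  right_inv x := by
    rcases x with (⟨p, h⟩ | ⟨p, h⟩) | ⟨p, h⟩
    · dsimp only [Sum.elim_inl, Sum.elim_inr]; rw [dif_pos h]
    · have hn1 : ¬(p.1.1 ∈ V₁ ∧ p.1.2 ∈ V₁) := by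
        rintro ⟨ha, _⟩
        exact Finset.disjoint_left.mp hdisj ha h.1
      dsimp only [Sum.elim_inl, Sum.elim_inr]
      rw [dif_neg hn1, dif_pos h]
    · have hn1 : ¬(p.1.1 ∈ V₁ ∧ p.1.2 ∈ V₁) := by
        rintro ⟨ha, hb⟩
        rcases h with ⟨_, h2'⟩ | ⟨h1', _⟩
        · exact Finset.disjoint_left.mp hdisj hb h2'
        · exact Finset.disjoint_left.mp hdisj ha h1'
      have hn2 : ¬(p.1.1 ∈ V₂ ∧ p.1.2 ∈ V₂) := by
        rintro ⟨ha, hb⟩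
        rcases h with ⟨h1', _⟩ | ⟨_, h2'⟩
        · exact Finset.disjoint_left.mp hdisj h1' ha
        · exact Finset.disjoint_left.mp hdisj h2' hb
      dsimp only [Sum.elim_inr]
      rw [dif_neg hn1, dif_neg hn2]

end GraphAux

open DAG MvPolynomial in
/-- If `G` is the disjoint union of two subgraphs `G₁` (on `V₁`) and `G₂` (on `V₂`),
then `I_G = I_{G₁} + I_{G₂} + ⟨σ_{ij} : i ∈ V₁, j ∈ V₂⟩`. -/
theorem gaussianIdeal_disjoint_union {n : ℕ} (G : DAG n) (V₁ V₂ : Finset (Fin n))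
    (hdisj : Disjoint V₁ V₂) (hcover : V₁ ∪ V₂ = Finset.univ)
    (hedge : ∀ i j, G.edge i j = true → ((i ∈ V₁ ∧ j ∈ V₁) ∨ (i ∈ V₂ ∧ j ∈ V₂))) :
    gaussianIdeal G =
      Ideal.map (rename (Subtype.val : SubIdx n V₁ → SymIdx n) :
          MvPolynomial (SubIdx n V₁) ℂ →ₐ[ℂ] MvPolynomial (SymIdx n) ℂ)
        (hiddenIdeal (G.induce V₁) V₁) ⊔
      Ideal.map (rename (Subtype.val : SubIdx n V₂ → SymIdx n) :
          MvPolynomial (SubIdx n V₂) ℂ →ₐ[ℂ] MvPolynomial (SymIdx n) ℂ)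
        (hiddenIdeal (G.induce V₂) V₂) ⊔
      Ideal.span {f | ∃ p : SymIdx n,
        ((p.1.1 ∈ V₁ ∧ p.1.2 ∈ V₂) ∨ (p.1.1 ∈ V₂ ∧ p.1.2 ∈ V₁)) ∧ f = X p} := by
  classical
  have hS₁ : ∀ a b, G.edge a b = true → b ∈ V₁ → a ∈ V₁ := by
    intro a b h hb
    rcases hedge a b h with ⟨h1, _⟩ | ⟨_, h2⟩
    · exact h1
    · exact (Finset.disjoint_left.mp hdisj hb h2).elim
  have hS₂ : ∀ a b, G.edge a b = true → b ∈ V₂ → a ∈ V₂ := by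
    intro a b h hb
    rcases hedge a b h with ⟨_, h2⟩ | ⟨h1, _⟩
    · exact (Finset.disjoint_left.mp hdisj h2 hb).elim
    · exact h1
  set W₁ : Set (Vars n) :=
    {v : Vars n | Sum.elim (fun a => a ∈ V₁) (fun e : Fin n × Fin n => e.1 ∈ V₁ ∧ e.2 ∈ V₁) v}
    with hW₁
  set W₂ : Set (Vars n) :=
    {v : Vars n | Sum.elim (fun a => a ∈ V₂) (fun e : Fin n × Fin n => e.1 ∈ V₂ ∧ e.2 ∈ V₂) v}
    with hW₂
  have hWdisj : Disjoint W₁ W₂ := by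
    rw [Set.disjoint_left]
    rintro (a | ed) h1 h2
    · exact Finset.disjoint_left.mp hdisj h1 h2
    · exact Finset.disjoint_left.mp hdisj h1.1 h2.1
  set ψ₁ : SubIdx n V₁ → MvPolynomial (Vars n) ℂ :=
    fun p => trekPoly (G.induce V₁) p.1.1.1 p.1.1.2 with hψ₁
  set ψ₂ : SubIdx n V₂ → MvPolynomial (Vars n) ℂ :=
    fun p => trekPoly (G.induce V₂) p.1.1.1 p.1.1.2 with hψ₂
  have hsupp₁ : ∀ q : SubIdx n V₁, ψ₁ q ∈ supported ℂ W₁ :=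
    fun q => trekPoly_mem_supported q.2.1 q.2.2
  have hsupp₂ : ∀ q : SubIdx n V₂, ψ₂ q ∈ supported ℂ W₂ :=
    fun q => trekPoly_mem_supported q.2.1 q.2.2
  set e := splitIdx V₁ V₂ hdisj hcover with he
  have main := ker_aeval_equiv e (fun p : SymIdx n => trekPoly G p.1.1 p.1.2)
  have hsymm : ∀ x, ⇑e.symm x =
      Sum.elim (Sum.elim Subtype.val Subtype.val) Subtype.val x := fun _ => rfl
  have hFe : ((fun p : SymIdx n => trekPoly G p.1.1 p.1.2) ∘ ⇑e.symm) =
      Sum.elim (Sum.elim ψ₁ ψ₂) (fun _ : CrossIdx n V₁ V₂ => (0 : MvPolynomial (Vars n) ℂ)) := by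
    funext x
    simp only [Function.comp_apply, hsymm]
    rcases x with (q | q) | c
    · simp only [Sum.elim_inl, hψ₁]
      exact trekPoly_induce hS₁ q.2.1 q.2.2
    · simp only [Sum.elim_inl, Sum.elim_inr, hψ₂]
      exact trekPoly_induce hS₂ q.2.1 q.2.2
    · simp only [Sum.elim_inr]
      rcases c.2 with ⟨h1, h2⟩ | ⟨h1, h2⟩
      · exact trekPoly_eq_zero_of_empty (trek_empty hS₁ hS₂ hdisj h1 h2)
      · exact trekPoly_eq_zero_of_empty (trek_empty hS₂ hS₁ hdisj.symm h1 h2)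
  rw [hFe, kerZ, kerT W₁ W₂ hWdisj ψ₁ ψ₂ hsupp₁ hsupp₂] at main
  simp only [Ideal.map_sup] at main
  simp only [map_rename_map_rename] at main
  have hv₁ : (⇑e.symm ∘ (Sum.inl ∘ Sum.inl)) = (Subtype.val : SubIdx n V₁ → SymIdx n) :=
    funext fun q => rfl
  have hv₂ : (⇑e.symm ∘ (Sum.inl ∘ Sum.inr)) = (Subtype.val : SubIdx n V₂ → SymIdx n) :=
    funext fun q => rfl
  rw [hv₁, hv₂] at main
  have hspan : Ideal.map (rename ⇑e.symm :
        MvPolynomial ((SubIdx n V₁ ⊕ SubIdx n V₂) ⊕ CrossIdx n V₁ V₂) ℂ →ₐ[ℂ]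
          MvPolynomial (SymIdx n) ℂ)
      (Ideal.span (Set.range fun t : CrossIdx n V₁ V₂ =>
        (X (Sum.inr t) : MvPolynomial ((SubIdx n V₁ ⊕ SubIdx n V₂) ⊕ CrossIdx n V₁ V₂) ℂ))) =
      Ideal.span {f | ∃ p : SymIdx n,
        ((p.1.1 ∈ V₁ ∧ p.1.2 ∈ V₂) ∨ (p.1.1 ∈ V₂ ∧ p.1.2 ∈ V₁)) ∧ f = X p} := by
    rw [Ideal.map_span]
    congr 1
    ext f
    simp only [Set.mem_image, Set.mem_range, Set.mem_setOf_eq, exists_exists_eq_and]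
    constructor
    · rintro ⟨t, rfl⟩
      exact ⟨t.1, t.2, by rw [rename_X, hsymm]; rfl⟩
    · rintro ⟨p, hp, rfl⟩
      exact ⟨(⟨p, hp⟩ : CrossIdx n V₁ V₂), by rw [rename_X, hsymm]; rfl⟩
  rw [hspan] at main
  exact main
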